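/- Let Λ be an even lattice and β ∈ Λ primitive with divisibility div(β). Then disc(β^⊥) = ± β² · disc(Λ) / div(β)², where β^⊥ ⊂ Λ is the orthogonal complement. In the special case disc(Λ) = 4 and div(β) ∈ {1, 2}: disc(β^⊥) = −4β² if div(β) = 1 and disc(β^⊥) = −β² if div(β) = 2. -/

import Mathlib

open Matrix

/-- Let `Λ` be an even nondegenerate lattice with Gram matrix `G`, `β ∈ Λ` primitive
with divisibility `d`, and let `D` be the discriminant (Gram determinant) of the
orthogonal complement `β^⊥ ⊂ Λ`.  Then `D = ± β² · disc(Λ) / d²`, i.e.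
`D·d² = ± β²·det G`.  In the special case `det G = 4` and `d ∈ {1, 2}`:
`D = −4β²` (up to the sign ambiguity) if `d = 1` and `D = −β²` if `d = 2`. -/
theorem disc_orthogonal_complement {n : ℕ}
    (G : Matrix (Fin n) (Fin n) ℤ) (hGsymm : G.IsSymm)
    (heven : ∀ v : Fin n → ℤ, 2 ∣ v ⬝ᵥ G.mulVec v)
    (hGdet : G.det ≠ 0)
    (β : Fin n → ℤ)
    (hβprim : ∀ (c : ℤ) (u : Fin n → ℤ), β = c • u → IsUnit c)
    (d : ℕ) (hd : 0 < d)
    (hdiv : ∀ t : ℤ, (∃ x : Fin n → ℤ, β ⬝ᵥ G.mulVec x = t) ↔ (d : ℤ) ∣ t)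
    (perp : Submodule ℤ (Fin n → ℤ))
    (hperp : ∀ x : Fin n → ℤ, x ∈ perp ↔ β ⬝ᵥ G.mulVec x = 0)
    (b' : Module.Basis (Fin (n - 1)) ℤ perp)
    (D : ℤ)
    (hD : D = (Matrix.of fun i j : Fin (n - 1) =>
      ((b' i : Fin n → ℤ) ⬝ᵥ G.mulVec (b' j : Fin n → ℤ))).det) :
    (∃ ε : ℤ, (ε = 1 ∨ ε = -1) ∧ D * (d : ℤ) ^ 2 = ε * (β ⬝ᵥ G.mulVec β) * G.det) ∧
    (G.det = 4 →
      (d = 1 → D = -(4 * (β ⬝ᵥ G.mulVec β)) ∨ D = 4 * (β ⬝ᵥ G.mulVec β)) ∧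
      (d = 2 → D = -(β ⬝ᵥ G.mulVec β) ∨ D = β ⬝ᵥ G.mulVec β)) := by
  -- symmetry of the form
  have hsym : ∀ x y : Fin n → ℤ, x ⬝ᵥ G.mulVec y = y ⬝ᵥ G.mulVec x := by
    intro x y
    rw [Matrix.dotProduct_mulVec, ← Matrix.mulVec_transpose, hGsymm.eq, dotProduct_comm]
  -- β ≠ 0
  have hβne : β ≠ 0 := by
    intro h
    have := hβprim 0 β (by simp [h])
    simpa using this
  -- n is positive
  rcases Nat.eq_zero_or_pos n with hn0 | hn
  · exfalso
    subst hn0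
    exact hβne (funext fun i => i.elim0)
  obtain ⟨m, rfl⟩ : ∃ m, n = m + 1 := ⟨n - 1, (Nat.succ_pred_eq_of_pos hn).symm⟩
  -- linearity helper
  have hlin : ∀ (x w : Fin (m+1) → ℤ) (k : ℤ),
      β ⬝ᵥ G.mulVec (x - k • w) = β ⬝ᵥ G.mulVec x - k * (β ⬝ᵥ G.mulVec w) := by
    intro x w k
    rw [Matrix.mulVec_sub, Matrix.mulVec_smul, dotProduct_sub, dotProduct_smul, smul_eq_mul]
  obtain ⟨w, hw⟩ := (hdiv d).mpr dvd_rfl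
  -- every vector decomposes along `perp` and `w`
  have hmem : ∀ x : Fin (m+1) → ℤ, ∃ k : ℤ, β ⬝ᵥ G.mulVec x = k * (d : ℤ) ∧
      x - k • w ∈ perp := by
    intro x
    obtain ⟨k, hk⟩ := (hdiv (β ⬝ᵥ G.mulVec x)).mp ⟨x, rfl⟩
    refine ⟨k, by rw [hk]; ring, ?_⟩
    rw [hperp, hlin, hw, hk]
    ring
  -- the rows of E: the basis of perp, followed by w
  set bv : Fin m → (Fin (m+1) → ℤ) := fun i => (b' i : Fin (m+1) → ℤ) with hbv
  have hbvperp : ∀ i, β ⬝ᵥ G.mulVec (bv i) = 0 := fun i => (hperp _).mp (b' i).2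
  set E : Matrix (Fin (m+1)) (Fin (m+1)) ℤ := Fin.snoc bv w with hE
  -- every vector is a combination of the rows of E
  have hcomb : ∀ x : Fin (m+1) → ℤ, ∃ c : Fin (m+1) → ℤ, ∑ i, c i • E i = x := by
    intro x
    obtain ⟨k, hk, hmemx⟩ := hmem x
    refine ⟨Fin.snoc (fun i => b'.repr ⟨x - k • w, hmemx⟩ i) k, ?_⟩
    have hsum : ((⟨x - k • w, hmemx⟩ : perp) : Fin (m+1) → ℤ)
        = ∑ i : Fin m, b'.repr ⟨x - k • w, hmemx⟩ i • bv i := by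
      conv_lhs => rw [← b'.sum_repr ⟨x - k • w, hmemx⟩]
      push_cast
      rfl
    rw [Fin.sum_univ_castSucc]
    simp only [hE, Fin.snoc_castSucc, Fin.snoc_last]
    rw [← hsum]
    show (x - k • w) + k • w = x
    abel
  -- hence det E is a unit
  have hEunit : E.det = 1 ∨ E.det = -1 := by
    rw [← Int.isUnit_iff]
    have hex : ∃ C : Matrix (Fin (m+1)) (Fin (m+1)) ℤ, C * E = 1 := by
      refine ⟨Matrix.of (fun j i => Classical.choose (hcomb (Pi.single j 1)) i), ?_⟩
      ext j l
      have hc := Classical.choose_spec (hcomb (Pi.single j 1))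
      have h2 := congrFun hc l
      simp only [Finset.sum_apply, Pi.smul_apply, smul_eq_mul] at h2
      rw [Matrix.mul_apply]
      simp only [Matrix.of_apply]
      rw [h2, Matrix.one_apply, Pi.single_apply]
      simp [eq_comm]
    obtain ⟨C, hC⟩ := hex
    have hdet : C.det * E.det = 1 := by rw [← Matrix.det_mul, hC, Matrix.det_one]
    exact IsUnit.of_mul_eq_one _ (by rw [mul_comm] at hdet; exact hdet)
  -- bilinear helper
  have hlinsum : ∀ (u : Fin (m+1) → ℤ) (N : ℕ) (c : Fin N → ℤ) (v : Fin N → Fin (m+1) → ℤ),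
      u ⬝ᵥ G.mulVec (∑ j, c j • v j) = ∑ j, c j * (u ⬝ᵥ G.mulVec (v j)) := by
    intro u N c v
    let L : (Fin (m+1) → ℤ) →ₗ[ℤ] ℤ :=
      { toFun := fun y => u ⬝ᵥ G.mulVec y
        map_add' := fun y z => by rw [Matrix.mulVec_add, dotProduct_add]
        map_smul' := fun r y => by rw [Matrix.mulVec_smul, dotProduct_smul]; rfl }
    calc u ⬝ᵥ G.mulVec (∑ j, c j • v j) = L (∑ j, c j • v j) := rfl
      _ = ∑ j, L (c j • v j) := map_sum L _ _
      _ = ∑ j, c j * (u ⬝ᵥ G.mulVec (v j)) := by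
          refine Finset.sum_congr rfl fun j _ => ?_
          rw [L.map_smul, smul_eq_mul]
          rfl
  -- the transition matrix
  obtain ⟨kβ, hkβ, hmemβ⟩ := hmem β
  set a : Fin m → ℤ := fun i => b'.repr ⟨β - kβ • w, hmemβ⟩ i with ha
  set F : Matrix (Fin (m+1)) (Fin (m+1)) ℤ := Fin.snoc bv β with hF
  set T : Matrix (Fin (m+1)) (Fin (m+1)) ℤ :=
    Fin.snoc (fun i : Fin m => (Pi.single i.castSucc 1 : Fin (m+1) → ℤ)) (Fin.snoc a kβ) with hT
  have hsumβ : ((⟨β - kβ • w, hmemβ⟩ : perp) : Fin (m+1) → ℤ) = ∑ i : Fin m, a i • bv i := by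
    conv_lhs => rw [← b'.sum_repr ⟨β - kβ • w, hmemβ⟩]
    push_cast
    rfl
  have hFTE : F = T * E := by
    ext r c
    refine Fin.lastCases ?_ ?_ r
    · rw [Matrix.mul_apply]
      simp only [hT, hF, Fin.snoc_last]
      rw [Fin.sum_univ_castSucc]
      simp only [Fin.snoc_castSucc, Fin.snoc_last, hE]
      have h3 := congrFun hsumβ c
      simp only [Finset.sum_apply, Pi.smul_apply, smul_eq_mul] at h3
      have h4 : (β - kβ • w) c = β c - kβ * w c := rfl
      rw [h4] at h3
      linarith [h3]
    · intro i
      rw [Matrix.mul_apply]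
      simp only [hT, hF, Fin.snoc_castSucc]
      simp [Pi.single_apply, hE, Fin.snoc_castSucc]
  have hTdet : T.det = kβ := by
    have htri : T.BlockTriangular OrderDual.toDual := by
      intro p q hpq
      have hlt : p < q := hpq
      obtain ⟨i, rfl⟩ := Fin.exists_castSucc_eq.mpr (Fin.ne_last_of_lt hlt)
      simp only [hT, Fin.snoc_castSucc]
      exact Pi.single_eq_of_ne (ne_of_gt hlt) 1
    rw [Matrix.det_of_lowerTriangular T htri, Fin.prod_univ_castSucc]
    simp [hT, Fin.snoc_castSucc, Fin.snoc_last]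
  -- Gram matrix entries
  have hgram : ∀ (M : Matrix (Fin (m+1)) (Fin (m+1)) ℤ) (r c : Fin (m+1)),
      (M * G * Mᵀ) r c = M r ⬝ᵥ G.mulVec (M c) := by
    intro M r c
    simp only [Matrix.mul_apply, Matrix.transpose_apply, Matrix.mulVec, dotProduct,
      Finset.sum_mul, Finset.mul_sum]
    rw [Finset.sum_comm]
    refine Finset.sum_congr rfl fun l _ => Finset.sum_congr rfl fun k _ => by ring
  -- determinant of the Gram matrix of F
  have hFgram : (F * G * Fᵀ).det = D * (β ⬝ᵥ G.mulVec β) := by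
    rw [Matrix.det_succ_row (F * G * Fᵀ) (Fin.last m), Fin.sum_univ_castSucc]
    have hz : ∀ j : Fin m, (F * G * Fᵀ) (Fin.last m) j.castSucc = 0 := by
      intro j
      rw [hgram]
      simp only [hF, Fin.snoc_last, Fin.snoc_castSucc]
      exact hbvperp j
    simp only [hz, mul_zero, zero_mul, Finset.sum_const_zero, zero_add]
    rw [Fin.succAbove_last]
    have hll : (F * G * Fᵀ) (Fin.last m) (Fin.last m) = β ⬝ᵥ G.mulVec β := by
      rw [hgram]; simp [hF, Fin.snoc_last]
    have hsub : ((F * G * Fᵀ).submatrix Fin.castSucc Fin.castSucc)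
        = Matrix.of fun i j : Fin m => (bv i ⬝ᵥ G.mulVec (bv j)) := by
      ext i j
      simp only [Matrix.submatrix_apply, Matrix.of_apply]
      rw [hgram]
      simp [hF, Fin.snoc_castSucc]
    rw [hll, hsub]
    have hone : (-1 : ℤ) ^ ((Fin.last m).val + (Fin.last m).val) = 1 := by
      rw [Fin.val_last]
      exact Even.neg_one_pow ⟨m, rfl⟩
    rw [hone, hD]
    simp only [hbv]
    show (1 : ℤ) * (β ⬝ᵥ G.mulVec β) * (Matrix.of fun i j : Fin (m+1-1) =>
        ((b' i : Fin (m+1) → ℤ) ⬝ᵥ G.mulVec (b' j : Fin (m+1) → ℤ))).det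
        = (Matrix.of fun i j : Fin (m+1-1) =>
        ((b' i : Fin (m+1) → ℤ) ⬝ᵥ G.mulVec (b' j : Fin (m+1) → ℤ))).det * (β ⬝ᵥ G.mulVec β)
    ring
  have hFE : (F * G * Fᵀ).det = kβ * kβ * (E.det * E.det * G.det) := by
    rw [hFTE, Matrix.transpose_mul, Matrix.det_mul, Matrix.det_mul, Matrix.det_mul,
      Matrix.det_mul, Matrix.det_transpose, Matrix.det_transpose, hTdet]
    ring
  have hE2 : E.det * E.det = 1 := by
    rcases hEunit with h | h <;> rw [h] <;> ring
  have hkey : D * (β ⬝ᵥ G.mulVec β) = kβ * kβ * G.det := by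
    rw [← hFgram, hFE, hE2]; ring
  -- the main formula
  have hmain : D * (d : ℤ) ^ 2 = (β ⬝ᵥ G.mulVec β) * G.det := by
    by_cases hB : (β ⬝ᵥ G.mulVec β) = 0
    · -- β lies in perp, so the Gram matrix of perp is degenerate and D = 0
      have hβperp : β ∈ perp := (hperp β).mpr hB
      set c : Fin m → ℤ := fun i => b'.repr ⟨β, hβperp⟩ i with hc
      have hsumβ2 : β = ∑ i : Fin m, c i • bv i := by
        conv_lhs => rw [show β = ((⟨β, hβperp⟩ : perp) : Fin (m+1) → ℤ) from rfl,
          ← b'.sum_repr ⟨β, hβperp⟩]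
        push_cast
        rfl
      have hcne : c ≠ 0 := by
        intro h0
        apply hβne
        rw [hsumβ2, h0]
        simp
      have hker : (Matrix.of fun i j : Fin m => (bv i ⬝ᵥ G.mulVec (bv j))) *ᵥ c = 0 := by
        funext i
        have : bv i ⬝ᵥ G.mulVec β = 0 := by rw [hsym]; exact hbvperp i
        rw [hsumβ2, hlinsum] at this
        simpa [Matrix.mulVec, dotProduct, mul_comm] using this
      have hD0 : D = 0 := by
        rw [hD]
        exact Matrix.exists_mulVec_eq_zero_iff.mp ⟨c, hcne, hker⟩
      rw [hD0, hB]
      ring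
    · have h5 : (β ⬝ᵥ G.mulVec β) * (D * (d : ℤ) ^ 2)
          = (β ⬝ᵥ G.mulVec β) * ((β ⬝ᵥ G.mulVec β) * G.det) := by
        calc (β ⬝ᵥ G.mulVec β) * (D * (d : ℤ) ^ 2)
            = (D * (β ⬝ᵥ G.mulVec β)) * (d : ℤ) ^ 2 := by ring
          _ = (kβ * kβ * G.det) * (d : ℤ) ^ 2 := by rw [hkey]
          _ = (kβ * (d : ℤ)) * (kβ * (d : ℤ)) * G.det := by ring
          _ = (β ⬝ᵥ G.mulVec β) * ((β ⬝ᵥ G.mulVec β) * G.det) := by rw [← hkβ]; ring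
      exact mul_left_cancel₀ hB h5
  constructor
  · exact ⟨1, Or.inl rfl, by rw [hmain]; ring⟩
  · intro h4
    constructor
    · intro hd1
      right
      rw [hd1] at hmain
      rw [h4] at hmain
      push_cast at hmain
      linarith [hmain]
    · intro hd2
      right
      rw [hd2] at hmain
      rw [h4] at hmain
      push_cast at hmain
      linarith [hmain]
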